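/- Let n ≥ 3 and let A_i, B_i be the n×n bonded Burau matrices as above. Then for 1 ≤ i ≤ n-2, A_i A_{i+1} B_i = B_{i+1} A_i A_{i+1}. -/

import Mathlib

set_option maxHeartbeats 1600000
set_option maxRecDepth 20000



/-- The ground ring `ℤ[t,t⁻¹,z]`: polynomials in `z` over Laurent polynomials in `t`. -/
noncomputable abbrev R : Type := Polynomial (LaurentPolynomial ℤ)

/-- The Laurent variable `t`. -/
noncomputable def t : R := Polynomial.C (LaurentPolynomial.T 1)

/-- The polynomial variable `z`. -/
noncomputable def z : R := Polynomial.X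

/-- The `n × n` unreduced Burau matrix of the braid generator `σ_i` (1-based index `i`):
identity except for the block `[[1-t, t],[1, 0]]` at rows/columns `i, i+1`. -/
noncomputable def burauA (n i : ℕ) : Matrix (Fin n) (Fin n) R :=
  Matrix.of fun p q =>
    if (p : ℕ) + 1 = i ∧ (q : ℕ) + 1 = i then 1 - t
    else if (p : ℕ) + 1 = i ∧ (q : ℕ) = i then t
    else if (p : ℕ) = i ∧ (q : ℕ) + 1 = i then 1
    else if (p : ℕ) = i ∧ (q : ℕ) = i then 0
    else if p = q then 1 else 0

/-- The `n × n` bonded Burau matrix of the bond generator `b_i` (1-based index `i`):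
identity except for the block `[[1-tz, tz],[z, 1-z]]` at rows/columns `i, i+1`. -/
noncomputable def burauB (n i : ℕ) : Matrix (Fin n) (Fin n) R :=
  Matrix.of fun p q =>
    if (p : ℕ) + 1 = i ∧ (q : ℕ) + 1 = i then 1 - t * z
    else if (p : ℕ) + 1 = i ∧ (q : ℕ) = i then t * z
    else if (p : ℕ) = i ∧ (q : ℕ) + 1 = i then z
    else if (p : ℕ) = i ∧ (q : ℕ) = i then 1 - z
    else if p = q then 1 else 0

open Matrix in
lemma burauA_eq (n i : ℕ) (a b : Fin n) (ha : (a : ℕ) + 1 = i) (hb : (b : ℕ) = i) :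
    burauA n i = 1 + single a a (-t) + single a b t
      + single b a 1 + single b b (-1) := by
  ext p q
  simp only [burauA, Matrix.of_apply, Matrix.add_apply, Matrix.one_apply,
    Matrix.single, Fin.ext_iff]
  split_ifs <;> first | omega | ring

open Matrix in
lemma burauB_eq (n i : ℕ) (a b : Fin n) (ha : (a : ℕ) + 1 = i) (hb : (b : ℕ) = i) :
    burauB n i = 1 + single a a (-(t*z)) + single a b (t*z)
      + single b a z + single b b (-z) := by
  ext p q
  simp only [burauB, Matrix.of_apply, Matrix.add_apply, Matrix.one_apply,
    Matrix.single, Fin.ext_iff]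
  split_ifs <;> first | omega | ring

noncomputable def stdE {n : ℕ} (x y : Fin n) : Matrix (Fin n) (Fin n) R :=
  Matrix.single x y (1 : R)

lemma std_smul {n : ℕ} (x y : Fin n) (c : R) :
    Matrix.single x y c = c • stdE x y := by
  ext p q
  simp [Matrix.single, stdE]

/-- mixed relation (M4): `A_i A_{i+1} B_i = B_{i+1} A_i A_{i+1}`
for the `n × n` bonded Burau matrices, `n ≥ 3`, `1 ≤ i ≤ n-2`. -/
theorem burau_mixed_M4 (n i : ℕ) (hn : 3 ≤ n) (hi1 : 1 ≤ i) (hi2 : i ≤ n - 2) :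
    burauA n i * burauA n (i + 1) * burauB n i =
      burauB n (i + 1) * (burauA n i * burauA n (i + 1)) := by
  have hi : i + 1 < n := by omega
  set a : Fin n := ⟨i - 1, by omega⟩ with ha'
  set b : Fin n := ⟨i, by omega⟩ with hb'
  set c : Fin n := ⟨i + 1, hi⟩ with hc'
  have ha : (a : ℕ) + 1 = i := by simp [ha']; omega
  have hb : (b : ℕ) = i := rfl
  have hbc : (b : ℕ) + 1 = i + 1 := rfl
  have hcc : (c : ℕ) = i + 1 := rfl
  have hab : a ≠ b := Fin.ne_of_val_ne (by omega)
  have hba : b ≠ a := hab.symm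
  have hbc' : b ≠ c := Fin.ne_of_val_ne (by omega)
  have hcb : c ≠ b := hbc'.symm
  have hac : a ≠ c := Fin.ne_of_val_ne (by omega)
  have hca : c ≠ a := hac.symm
  rw [burauA_eq n i a b ha hb, burauA_eq n (i+1) b c hbc hcc,
    burauB_eq n i a b ha hb, burauB_eq n (i+1) b c hbc hcc]
  simp only [add_mul, mul_add, one_mul, mul_one,
    Matrix.single_mul_single_same, Matrix.single_mul_single_of_ne,
    hab, hba, hbc', hcb, hac, hca, ne_eq, not_false_eq_true,
    zero_mul, mul_zero, add_zero, zero_add]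
  simp only [std_smul]
  module
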